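/- For every integer l ≥ 1 and every real α with 1/2 < α < 1 − 1/e, there exist an integer k ≥ 2, a real c > 1, and an integer t_0 such that for every integer t ≥ t_0 there exists a family F ⊆ {0,1}^t with the following properties: (i) |F| ≥ c^t; (ii) for every a ∈ F, any two positions p < q with a_p = a_q = 1 satisfy q − p ≥ l + 1 (i.e., there are at least l zeros between any two ones of a); (iii) for every k-element subset {a^1,…,a^k} ⊆ F, the coordinatewise OR b defined by b_i = max_{1 ≤ j ≤ k} a^j_i has at least α·t coordinates equal to 1. -/

import Mathlib

open List
open Finset

def agr {n m : ℕ} (p q : Fin n → Fin m) : ℕ :=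
  (Finset.univ.filter fun i => p i = q i).card

lemma agr_comm {n m : ℕ} (p q : Fin n → Fin m) : agr p q = agr q p := by
  unfold agr; congr 1; ext i; simp [eq_comm]

lemma agr_self {n m : ℕ} (p : Fin n → Fin m) : agr p p = n := by
  simp [agr]

lemma sum_pow_agr {n m : ℕ} (hm : 1 ≤ m) (p : Fin n → Fin m) :
    ∑ y : Fin n → Fin m, (6/5 : ℝ) ^ agr p y = ((m : ℝ) + 1/5) ^ n := by
  have key : ∀ y : Fin n → Fin m, (6/5 : ℝ) ^ agr p y
      = ∏ i : Fin n, (if p i = y i then (6/5 : ℝ) else 1) := by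
    intro y
    rw [Finset.prod_ite, Finset.prod_const, Finset.prod_const, one_pow, mul_one]
    rfl
  simp_rw [key]
  have h2 := Fintype.prod_sum (ι := Fin n) (κ := fun _ => Fin m)
    (f := fun i v => if p i = v then (6/5 : ℝ) else 1)
  rw [← h2]
  have : ∀ i : Fin n, (∑ v : Fin m, if p i = v then (6/5 : ℝ) else 1) = (m : ℝ) + 1/5 := by
    intro i
    have : (∑ v : Fin m, if p i = v then (6/5 : ℝ) else 1)
        = ∑ v : Fin m, ((if p i = v then (1/5 : ℝ) else 0) + 1) := by
      apply Finset.sum_congr rfl; intro v _; split_ifs <;> norm_num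
    rw [this, Finset.sum_add_distrib, Finset.sum_ite_eq, Finset.sum_const,
      Finset.card_univ, Fintype.card_fin]
    simp
    ring
  rw [Finset.prod_congr rfl (fun i _ => this i), Finset.prod_const, Finset.card_univ,
    Fintype.card_fin]

lemma exists_code (n m s : ℕ) (hm : 1 ≤ m) (hsn : s ≤ n) :
    ∃ C : Finset (Fin n → Fin m),
      (∀ p ∈ C, ∀ q ∈ C, p ≠ q → agr p q < s) ∧
      (m : ℝ) ^ n ≤ (C.card : ℝ) * (((m : ℝ) + 1/5) ^ n / (6/5 : ℝ) ^ s) := by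
  classical
  set good : Finset (Fin n → Fin m) → Prop :=
    fun C => ∀ p ∈ C, ∀ q ∈ C, p ≠ q → agr p q < s with hgood
  have hne : ((univ : Finset (Finset (Fin n → Fin m))).filter good).Nonempty := by
    refine ⟨∅, ?_⟩
    simp [hgood]
  obtain ⟨C, hCmem, hCmax⟩ := Finset.exists_max_image _ Finset.card hne
  have hCgood : good C := (Finset.mem_filter.mp hCmem).2
  refine ⟨C, hCgood, ?_⟩
  -- covering property
  set ball : (Fin n → Fin m) → Finset (Fin n → Fin m) :=
    fun p => univ.filter (fun y => s ≤ agr p y) with hball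
  have hcover : (univ : Finset (Fin n → Fin m)) ⊆ C.biUnion ball := by
    intro y _
    by_contra hy
    simp only [Finset.mem_biUnion, hball, Finset.mem_filter, Finset.mem_univ, true_and,
      not_exists, not_and, not_le] at hy
    have hyC : y ∉ C := by
      intro hyC
      have := hy y hyC
      rw [agr_self] at this
      omega
    have hgood' : good (insert y C) := by
      intro p hp q hq hpq
      rcases Finset.mem_insert.mp hp with hp1 | hp1 <;>
        rcases Finset.mem_insert.mp hq with hq1 | hq1
      · exact absurd (hp1.trans hq1.symm) hpq
      · subst hp1; exact (agr_comm p q ▸ hy q hq1)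
      · subst hq1; exact hy p hp1
      · exact hCgood p hp1 q hq1 hpq
    have hmem : insert y C ∈ (univ.filter good) := by
      simp only [Finset.mem_filter, Finset.mem_univ, true_and]
      exact hgood'
    have := hCmax _ hmem
    rw [Finset.card_insert_of_notMem hyC] at this
    omega
  -- counting
  have hcard : (m : ℕ) ^ n ≤ ∑ p ∈ C, (ball p).card := by
    calc (m : ℕ) ^ n = (univ : Finset (Fin n → Fin m)).card := by
          simp [Finset.card_univ]
      _ ≤ (C.biUnion ball).card := Finset.card_le_card hcover
      _ ≤ ∑ p ∈ C, (ball p).card := Finset.card_biUnion_le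
  have hballbound : ∀ p : Fin n → Fin m,
      ((ball p).card : ℝ) ≤ ((m : ℝ) + 1/5) ^ n / (6/5 : ℝ) ^ s := by
    intro p
    rw [le_div_iff₀ (by positivity)]
    calc ((ball p).card : ℝ) * (6/5 : ℝ) ^ s = ∑ _y ∈ ball p, (6/5 : ℝ) ^ s := by
          rw [Finset.sum_const, nsmul_eq_mul]
      _ ≤ ∑ y ∈ ball p, (6/5 : ℝ) ^ agr p y := by
          apply Finset.sum_le_sum
          intro y hy
          have : s ≤ agr p y := (Finset.mem_filter.mp hy).2
          exact pow_le_pow_right₀ (by norm_num) this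
      _ ≤ ∑ y : Fin n → Fin m, (6/5 : ℝ) ^ agr p y := by
          apply Finset.sum_le_sum_of_subset_of_nonneg (Finset.subset_univ _)
          intro y _ _; positivity
      _ = ((m : ℝ) + 1/5) ^ n := sum_pow_agr hm p
  calc (m : ℝ) ^ n = ((m ^ n : ℕ) : ℝ) := by push_cast; ring
    _ ≤ ((∑ p ∈ C, (ball p).card : ℕ) : ℝ) := by exact_mod_cast hcard
    _ = ∑ p ∈ C, ((ball p).card : ℝ) := by push_cast; ring
    _ ≤ ∑ _p ∈ C, ((m : ℝ) + 1/5) ^ n / (6/5 : ℝ) ^ s :=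
        Finset.sum_le_sum (fun p _ => hballbound p)
    _ = (C.card : ℝ) * (((m : ℝ) + 1/5) ^ n / (6/5 : ℝ) ^ s) := by
        rw [Finset.sum_const, nsmul_eq_mul]

/-- the string associated to a codeword -/

lemma exp_nine_fifty : Real.exp (9/50) ≤ 6/5 := by
  have h50 : (0:ℕ) < 50 := by norm_num
  refine le_of_pow_le_pow_left₀ (n := 50) (by norm_num) (by norm_num) ?_
  have h1 : Real.exp (9/50 : ℝ) ^ (50:ℕ) = Real.exp 9 := by
    rw [← Real.exp_nat_mul]; norm_num
  rw [h1]
  have h2 : Real.exp 9 = Real.exp 1 ^ (9:ℕ) := by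
    rw [← Real.exp_nat_mul]; norm_num
  rw [h2]
  have h3 : Real.exp 1 ≤ 2.7182818286 := (Real.exp_one_lt_d9).le
  calc Real.exp 1 ^ (9:ℕ) ≤ (2.7182818286 : ℝ) ^ (9:ℕ) :=
        pow_le_pow_left₀ (Real.exp_pos 1).le h3 9
    _ ≤ (6/5 : ℝ) ^ (50:ℕ) := by norm_num

lemma exists_code' (n m s : ℕ) (hm : 1 ≤ m) (hsn : s ≤ n) (h6 : 6*n ≤ 5*m*s) :
    ∃ C : Finset (Fin n → Fin m),
      (∀ p ∈ C, ∀ q ∈ C, p ≠ q → agr p q < s) ∧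
      Real.exp ((n : ℝ)/(100*m)) ≤ (C.card : ℝ) := by
  obtain ⟨C, hgood, hcard⟩ := exists_code n m s hm hsn
  refine ⟨C, hgood, ?_⟩
  have hm0 : (0:ℝ) < m := by exact_mod_cast hm
  have hpow : (0:ℝ) < ((m:ℝ) + 1/5) ^ n := by positivity
  have hpows : (0:ℝ) < (6/5 : ℝ) ^ s := by positivity
  -- C.card ≥ m^n (6/5)^s / (m+1/5)^n
  have h1 : (m:ℝ)^n * (6/5:ℝ)^s / ((m:ℝ)+1/5)^n ≤ (C.card : ℝ) := by
    rw [div_le_iff₀ hpow]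
    have h2 := mul_le_mul_of_nonneg_right hcard hpows.le
    calc (m:ℝ)^n * (6/5:ℝ)^s ≤ (C.card : ℝ) * (((m : ℝ) + 1/5) ^ n / (6/5 : ℝ) ^ s) * (6/5:ℝ)^s := h2
      _ = (C.card : ℝ) * ((m : ℝ) + 1/5) ^ n := by field_simp
  refine le_trans ?_ h1
  -- m^n (6/5)^s / (m+1/5)^n = (6/5)^s / (1+1/(5m))^n
  have hsplit : ((m:ℝ)+1/5)^n = (m:ℝ)^n * (1 + 1/(5*m))^n := by
    rw [← mul_pow]; congr 1; field_simp
  rw [hsplit]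
  have hmn : (0:ℝ) < (m:ℝ)^n := pow_pos hm0 n
  have hq : (0:ℝ) < (1 + 1/(5*(m:ℝ)))^n := by positivity
  have key : Real.exp ((n : ℝ)/(100*m)) * (1 + 1/(5*(m:ℝ)))^n ≤ (6/5:ℝ)^s := by
    have hA : (1 + 1/(5*(m:ℝ)))^n ≤ Real.exp ((n:ℝ)/(5*m)) := by
      have : (1 + 1/(5*(m:ℝ))) ≤ Real.exp (1/(5*m)) := by
        have := Real.add_one_le_exp (1/(5*(m:ℝ)))
        linarith
      calc (1 + 1/(5*(m:ℝ)))^n ≤ (Real.exp (1/(5*m)))^n := by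
            apply pow_le_pow_left₀ (by positivity) this
        _ = Real.exp ((n:ℝ)/(5*m)) := by
            rw [← Real.exp_nat_mul]; congr 1; ring
    have hB : Real.exp ((9/50) * s) ≤ (6/5:ℝ)^s := by
      calc Real.exp ((9/50) * (s:ℝ)) = Real.exp ((9/50:ℝ)) ^ (s:ℕ) := by
            rw [← Real.exp_nat_mul]; congr 1; ring
        _ ≤ (6/5:ℝ)^s := pow_le_pow_left₀ (Real.exp_pos _).le exp_nine_fifty s
    calc Real.exp ((n : ℝ)/(100*m)) * (1 + 1/(5*(m:ℝ)))^n
        ≤ Real.exp ((n : ℝ)/(100*m)) * Real.exp ((n:ℝ)/(5*m)) := by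
          exact mul_le_mul_of_nonneg_left hA (Real.exp_pos _).le
      _ = Real.exp ((n : ℝ)/(100*m) + (n:ℝ)/(5*m)) := by rw [← Real.exp_add]
      _ ≤ Real.exp ((9/50) * s) := by
          apply Real.exp_le_exp.mpr
          have h6' : (6:ℝ)*n ≤ 5*m*s := by exact_mod_cast h6
          rw [div_add_div _ _ (by positivity) (by positivity)]
          rw [div_le_iff₀ (by positivity)]
          nlinarith [hm0]
      _ ≤ (6/5:ℝ)^s := hB
  calc Real.exp ((n : ℝ)/(100*m))
      = Real.exp ((n : ℝ)/(100*m)) * (1 + 1/(5*(m:ℝ)))^n / (1 + 1/(5*(m:ℝ)))^n := by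
        field_simp
    _ ≤ (6/5:ℝ)^s / (1 + 1/(5*(m:ℝ)))^n :=
        (div_le_div_iff_of_pos_right hq).mpr key
    _ = (m:ℝ)^n * (6/5:ℝ)^s / ((m:ℝ)^n * (1 + 1/(5*(m:ℝ)))^n) := by
        rw [mul_div_mul_left _ _ (ne_of_gt hmn)]

def strA (m L n t : ℕ) (p : Fin n → Fin m) : Fin t → Bool := fun i =>
  if h : i.val / L < n then
    decide ((i.val % L) % m = (p ⟨i.val / L, h⟩).val ∧ i.val % L + m < L)
  else false

lemma strA_true {m L n t : ℕ} (p : Fin n → Fin m) (i : Fin t) :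
    strA m L n t p i = true ↔
      ∃ h : i.val / L < n,
        (i.val % L) % m = (p ⟨i.val / L, h⟩).val ∧ i.val % L + m < L := by
  unfold strA
  split
  · rename_i h
    simp only [decide_eq_true_iff]
    exact ⟨fun hc => ⟨h, hc⟩, fun ⟨h', hc⟩ => hc⟩
  · rename_i h
    simp only [Bool.false_eq_true, false_iff]
    rintro ⟨h', -⟩
    exact h h'

lemma coord_facts {m L n t : ℕ} (hm : 1 ≤ m) (hL : L = 1000*m) (hLn : L*n ≤ t)
    (b : Fin n) (v : Fin m) (j : ℕ) (hj : j < 999) :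
    (v.val + j*m + b.val*L < t) ∧
    ((v.val + j*m + b.val*L) / L = b.val) ∧
    ((v.val + j*m + b.val*L) % L = v.val + j*m) := by
  have hv := v.isLt
  have hb := b.isLt
  have hL0 : 0 < L := by omega
  have hrem : v.val + j*m < L := by
    have : j*m ≤ 998*m := Nat.mul_le_mul_right m (by omega)
    omega
  refine ⟨?_, ?_, ?_⟩
  · have h2 : L + b.val*L = (b.val+1)*L := by ring
    have h3 : (b.val+1)*L ≤ n*L := Nat.mul_le_mul_right L (by omega)
    have h4 : n*L = L*n := by ring
    omega
  · rw [Nat.add_mul_div_right _ _ hL0, Nat.div_eq_of_lt hrem]; omega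
  · rw [Nat.add_mul_mod_self_right, Nat.mod_eq_of_lt hrem]

lemma strA_at_coord {m L n t : ℕ} (hm : 1 ≤ m) (hL : L = 1000*m) (hLn : L*n ≤ t)
    (p : Fin n → Fin m) (b : Fin n) (v : Fin m) (j : ℕ) (hj : j < 999) (hpb : p b = v) :
    strA m L n t p ⟨v.val + j*m + b.val*L,
      (coord_facts hm hL hLn b v j hj).1⟩ = true := by
  obtain ⟨h1, h2, h3⟩ := coord_facts hm hL hLn b v j hj
  rw [strA_true]
  refine ⟨by rw [h2]; exact b.isLt, ?_, ?_⟩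
  · have hbeq : (⟨(v.val + j*m + b.val*L) / L, by rw [h2]; exact b.isLt⟩ : Fin n) = b :=
      Fin.ext h2
    rw [hbeq, h3, hpb, Nat.add_mul_mod_self_right, Nat.mod_eq_of_lt v.isLt]
  · rw [h3]
    have hv := v.isLt
    have : j*m ≤ 998*m := Nat.mul_le_mul_right m (by omega)
    omega

lemma strA_inj {m L n t : ℕ} (hm : 1 ≤ m) (hL : L = 1000*m) (hLn : L*n ≤ t) :
    Function.Injective (strA m L n t) := by
  intro p q hpq
  by_contra hne
  obtain ⟨b, hb⟩ : ∃ b, p b ≠ q b := by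
    by_contra h
    push_neg at h
    exact hne (funext h)
  obtain ⟨h1, h2, h3⟩ := coord_facts hm hL hLn b (p b) 0 (by omega)
  have hfi := strA_at_coord hm hL hLn p b (p b) 0 (by omega) rfl
  rw [hpq] at hfi
  rw [strA_true] at hfi
  obtain ⟨hh, hc, -⟩ := hfi
  simp only [Fin.val_mk] at hc hh
  have hbeq : (⟨((p b).val + 0*m + b.val*L) / L, hh⟩ : Fin n) = b := Fin.ext h2
  rw [hbeq, h3] at hc
  have hval : ((p b).val + 0*m) % m = (p b).val := by
    simp only [Nat.zero_mul, Nat.add_zero]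
    exact Nat.mod_eq_of_lt (p b).isLt
  rw [hval] at hc
  exact hb (Fin.ext hc)

lemma strA_gap {m L n t : ℕ} (hm : 1 ≤ m) (hL : L = 1000*m)
    (p : Fin n → Fin m) (i j : Fin t) (hij : i < j)
    (hi : strA m L n t p i = true) (hj : strA m L n t p j = true) :
    m ≤ j.val - i.val := by
  rw [strA_true] at hi hj
  obtain ⟨hbi, hri, hgi⟩ := hi
  obtain ⟨hbj, hrj, hgj⟩ := hj
  have hijv : i.val < j.val := hij
  have hdi := Nat.div_add_mod i.val L
  have hdj := Nat.div_add_mod j.val L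
  have hble : i.val / L ≤ j.val / L := Nat.div_le_div_right (le_of_lt hijv)
  rcases Nat.lt_or_ge (i.val / L) (j.val / L) with hblt | hbeq
  · -- different blocks : gap at least L - (i%L) ≥ m+1
    have h1 : L * (i.val / L) + L ≤ L * (j.val / L) := by
      have h2 : i.val / L + 1 ≤ j.val / L := hblt
      calc L * (i.val / L) + L = L * (i.val / L + 1) := by ring
        _ ≤ L * (j.val / L) := Nat.mul_le_mul_left L h2
    obtain ⟨A, hA⟩ : ∃ A, L * (i.val / L) = A := ⟨_, rfl⟩
    obtain ⟨B, hB⟩ : ∃ B, L * (j.val / L) = B := ⟨_, rfl⟩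
    rw [hA] at hdi h1
    rw [hB] at hdj h1
    omega
  · -- same block
    have hbeq' : i.val / L = j.val / L := le_antisymm hble hbeq
    have hfin : (⟨i.val / L, hbi⟩ : Fin n) = ⟨j.val / L, hbj⟩ := Fin.ext hbeq'
    have hmod : (i.val % L) % m = (j.val % L) % m := by
      rw [hri, hrj, hfin]
    rw [hbeq'] at hdi
    obtain ⟨A, hA⟩ : ∃ A, L * (j.val / L) = A := ⟨_, rfl⟩
    rw [hA] at hdi hdj
    have holt : i.val % L < j.val % L := by omega
    have hdvd : m ∣ (j.val % L - i.val % L) :=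
      (Nat.modEq_iff_dvd' (le_of_lt holt)).mp hmod
    have hge : m ≤ j.val % L - i.val % L :=
      Nat.le_of_dvd (by omega) hdvd
    omega

lemma cs_bound {n m : ℕ} (s : ℕ) (T : Finset (Fin n → Fin m))
    (hgood : ∀ p ∈ T, ∀ q ∈ T, p ≠ q → agr p q < s) :
    ((n : ℝ) * T.card)^2 ≤
      ((Finset.univ.filter (fun bv : Fin n × Fin m => ∃ p ∈ T, p bv.1 = bv.2)).card : ℝ)
        * (T.card * n + T.card * T.card * s) := by
  classical
  set k := T.card with hk
  set supp := (Finset.univ.filter (fun bv : Fin n × Fin m => ∃ p ∈ T, p bv.1 = bv.2)) with hsupp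
  set M : Fin n × Fin m → ℕ := fun bv => (T.filter fun p => p bv.1 = bv.2).card with hM
  -- total mass
  have h_fiber : ∀ b : Fin n, ∑ v : Fin m, M (b, v) = k := by
    intro b
    rw [hk, Finset.card_eq_sum_card_fiberwise (f := fun (p : Fin n → Fin m) => p b)
      (t := Finset.univ) (fun p _ => Finset.mem_univ _)]
  have h_all : ∑ bv : Fin n × Fin m, (M bv : ℝ) = (n : ℝ) * k := by
    rw [Fintype.sum_prod_type]
    have : ∀ b : Fin n, ∑ v : Fin m, (M (b, v) : ℝ) = (k : ℝ) := by
      intro b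
      rw [← Nat.cast_sum]
      exact_mod_cast congrArg (Nat.cast : ℕ → ℝ) (h_fiber b)
    rw [Finset.sum_congr rfl (fun b _ => this b), Finset.sum_const, Finset.card_univ,
      Fintype.card_fin, nsmul_eq_mul]
  have h_supp_zero : ∀ bv : Fin n × Fin m, bv ∉ supp → M bv = 0 := by
    intro bv hbv
    rw [hsupp] at hbv
    simp only [Finset.mem_filter, Finset.mem_univ, true_and, not_exists, not_and] at hbv
    rw [hM]
    simp only [Finset.card_eq_zero, Finset.filter_eq_empty_iff]
    intro p hp
    exact hbv p hp
  have h_suppsum : ∑ bv ∈ supp, (M bv : ℝ) = (n : ℝ) * k := by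
    rw [← h_all]
    apply Finset.sum_subset (Finset.subset_univ _)
    intro bv _ hbv
    rw [h_supp_zero bv hbv]
    norm_num
  -- sum of squares equals sum of agreements
  have h_sqsum : ∑ bv : Fin n × Fin m, M bv * M bv = ∑ p ∈ T, ∑ q ∈ T, agr p q := by
    have hMsum : ∀ bv : Fin n × Fin m, M bv = ∑ p ∈ T, (if p bv.1 = bv.2 then 1 else 0) := by
      intro bv
      rw [hM]
      exact Finset.card_filter _ _
    calc ∑ bv : Fin n × Fin m, M bv * M bv
        = ∑ bv : Fin n × Fin m, ∑ p ∈ T, ∑ q ∈ T,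
            (if p bv.1 = bv.2 then 1 else 0) * (if q bv.1 = bv.2 then 1 else 0) := by
          apply Finset.sum_congr rfl
          intro bv _
          rw [hMsum bv, Finset.sum_mul_sum]
      _ = ∑ p ∈ T, ∑ q ∈ T, ∑ bv : Fin n × Fin m,
            (if p bv.1 = bv.2 then 1 else 0) * (if q bv.1 = bv.2 then 1 else 0) := by
          rw [Finset.sum_comm]
          apply Finset.sum_congr rfl
          intro p _
          rw [Finset.sum_comm]
      _ = ∑ p ∈ T, ∑ q ∈ T, agr p q := by
          apply Finset.sum_congr rfl
          intro p _
          apply Finset.sum_congr rfl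
          intro q _
          rw [Fintype.sum_prod_type]
          have hinner : ∀ b : Fin n,
              (∑ v : Fin m, (if p b = v then 1 else 0) * (if q b = v then 1 else 0))
              = if p b = q b then 1 else 0 := by
            intro b
            rcases eq_or_ne (p b) (q b) with h | h
            · rw [if_pos h, h]
              have hterm : ∀ v : Fin m,
                  (if q b = v then (1:ℕ) else 0) * (if q b = v then 1 else 0)
                  = if q b = v then 1 else 0 := fun v => by split_ifs <;> norm_num
              rw [Finset.sum_congr rfl (fun v _ => hterm v), Finset.sum_ite_eq]
              simp
            · rw [if_neg h]
              apply Finset.sum_eq_zero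
              intro v _
              split_ifs with h1 h2 <;> simp_all
          rw [Finset.sum_congr rfl (fun b _ => hinner b)]
          rw [agr, Finset.card_filter]
  -- bound on the agreement sum
  have h_agr : ∑ p ∈ T, ∑ q ∈ T, agr p q ≤ k * n + k * k * s := by
    have hrow : ∀ p ∈ T, ∑ q ∈ T, agr p q ≤ n + k * s := by
      intro p hp
      rw [← Finset.sum_erase_add T _ hp]
      have h1 : agr p p ≤ n := by
        rw [agr]
        calc (Finset.univ.filter fun i => p i = p i).card ≤ (Finset.univ : Finset (Fin n)).card :=
          Finset.card_le_card (Finset.filter_subset _ _)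
        _ = n := by simp
      have h2 : ∑ q ∈ T.erase p, agr p q ≤ k * s := by
        calc ∑ q ∈ T.erase p, agr p q ≤ ∑ _q ∈ T.erase p, s := by
              apply Finset.sum_le_sum
              intro q hq
              exact le_of_lt (hgood p hp q (Finset.mem_of_mem_erase hq)
                (fun hc => Finset.notMem_erase p T (hc ▸ hq)))
          _ = (T.erase p).card * s := by rw [Finset.sum_const, smul_eq_mul]
          _ ≤ k * s := Nat.mul_le_mul_right s (le_trans (Finset.card_erase_le) le_rfl)
      omega
    calc ∑ p ∈ T, ∑ q ∈ T, agr p q ≤ ∑ _p ∈ T, (n + k * s) := Finset.sum_le_sum hrow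
      _ = k * (n + k * s) := by rw [Finset.sum_const, smul_eq_mul]
      _ = k * n + k * k * s := by ring
  -- Cauchy-Schwarz
  have hCS := Finset.sum_mul_sq_le_sq_mul_sq supp (fun _ => (1:ℝ)) (fun bv => (M bv : ℝ))
  simp only [one_mul, one_pow] at hCS
  have h1 : (∑ _bv ∈ supp, (1:ℝ)) = (supp.card : ℝ) := by
    rw [Finset.sum_const, nsmul_eq_mul, mul_one]
  rw [h_suppsum, h1] at hCS
  have h2 : ∑ bv ∈ supp, ((M bv : ℝ))^2 ≤ (k * n + k * k * s : ℝ) := by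
    calc ∑ bv ∈ supp, ((M bv : ℝ))^2 ≤ ∑ bv : Fin n × Fin m, ((M bv : ℝ))^2 := by
          apply Finset.sum_le_sum_of_subset_of_nonneg (Finset.subset_univ _)
          intro bv _ _; positivity
      _ = ((∑ bv : Fin n × Fin m, M bv * M bv : ℕ) : ℝ) := by
          push_cast; apply Finset.sum_congr rfl; intro bv _; ring
      _ ≤ ((k * n + k * k * s : ℕ) : ℝ) := by
          exact_mod_cast (h_sqsum ▸ h_agr)
      _ = (k * n + k * k * s : ℝ) := by push_cast; ring
  calc ((n : ℝ) * k)^2 ≤ (supp.card : ℝ) * ∑ bv ∈ supp, ((M bv : ℝ))^2 := hCS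
    _ ≤ (supp.card : ℝ) * (k * n + k * k * s : ℝ) := by
        apply mul_le_mul_of_nonneg_left h2 (Nat.cast_nonneg _)

lemma or_bound {m L n t : ℕ} (hm : 1 ≤ m) (hL : L = 1000*m) (hLn : L*n ≤ t)
    (T : Finset (Fin n → Fin m)) (O : Finset (Fin t))
    (hO : ∀ p ∈ T, ∀ i : Fin t, strA m L n t p i = true → i ∈ O) :
    999 * (Finset.univ.filter
      (fun bv : Fin n × Fin m => ∃ p ∈ T, p bv.1 = bv.2)).card ≤ O.card := by
  classical
  set supp := (Finset.univ.filter
    (fun bv : Fin n × Fin m => ∃ p ∈ T, p bv.1 = bv.2)) with hsupp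
  set P : Finset ((Fin n × Fin m) × Fin 999) := supp ×ˢ Finset.univ with hP
  have hPcard : P.card = supp.card * 999 := by
    rw [hP, Finset.card_product, Finset.card_univ, Fintype.card_fin]
  have hmain : P.card ≤ O.card := by
    apply Finset.card_le_card_of_injOn
      (fun x => (⟨x.1.2.val + x.2.val*m + x.1.1.val*L,
        (coord_facts hm hL hLn x.1.1 x.1.2 x.2.val x.2.isLt).1⟩ : Fin t))
    · -- maps into O
      intro x hx
      rw [hP, Finset.mem_coe, Finset.mem_product] at hx
      obtain ⟨hx1, -⟩ := hx
      rw [hsupp, Finset.mem_filter] at hx1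
      obtain ⟨-, p, hpT, hpv⟩ := hx1
      exact hO p hpT _ (strA_at_coord hm hL hLn p x.1.1 x.1.2 x.2.val x.2.isLt hpv)
    · -- injective
      intro x _ y _ hxy
      have hval : x.1.2.val + x.2.val*m + x.1.1.val*L
          = y.1.2.val + y.2.val*m + y.1.1.val*L := congrArg Fin.val hxy
      obtain ⟨-, hdx, hmx⟩ := coord_facts hm hL hLn x.1.1 x.1.2 x.2.val x.2.isLt
      obtain ⟨-, hdy, hmy⟩ := coord_facts hm hL hLn y.1.1 y.1.2 y.2.val y.2.isLt
      have hb : x.1.1.val = y.1.1.val := by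
        rw [← hdx, ← hdy, hval]
      have hrem : x.1.2.val + x.2.val*m = y.1.2.val + y.2.val*m := by
        rw [← hmx, ← hmy, hval]
      have hv : x.1.2.val = y.1.2.val := by
        have h1 : (x.1.2.val + x.2.val*m) % m = x.1.2.val := by
          rw [Nat.add_mul_mod_self_right, Nat.mod_eq_of_lt x.1.2.isLt]
        have h2 : (y.1.2.val + y.2.val*m) % m = y.1.2.val := by
          rw [Nat.add_mul_mod_self_right, Nat.mod_eq_of_lt y.1.2.isLt]
        rw [← h1, ← h2, hrem]
      have hj : x.2.val = y.2.val := by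
        have h1 : (x.1.2.val + x.2.val*m) / m = x.2.val := by
          rw [Nat.add_mul_div_right _ _ (by omega : 0 < m),
            Nat.div_eq_of_lt x.1.2.isLt]
          omega
        have h2 : (y.1.2.val + y.2.val*m) / m = y.2.val := by
          rw [Nat.add_mul_div_right _ _ (by omega : 0 < m),
            Nat.div_eq_of_lt y.1.2.isLt]
          omega
        rw [← h1, ← h2, hrem]
      exact Prod.ext (Prod.ext (Fin.ext hb) (Fin.ext hv)) (Fin.ext hj)
  omega

set_option maxHeartbeats 1000000 in
lemma construction (m : ℕ) (hm : 2 ≤ m) (t : ℕ) (ht : 1000000000*m^2 ≤ t) :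
    ∃ F : Finset (Fin t → Bool),
      Real.exp ((t:ℝ)/(200000*m^2)) ≤ (F.card : ℝ) ∧
      (∀ a ∈ F, ∀ p q : Fin t, p < q → a p = true → a q = true → m ≤ q.val - p.val) ∧
      (∀ S : Finset (Fin t → Bool), S ⊆ F → S.card = 1000*m →
        (16/25 : ℝ) * t ≤ ({i : Fin t | ∃ a ∈ S, a i = true}.ncard : ℝ)) := by
  classical
  have hm1 : 1 ≤ m := by omega
  obtain ⟨L, hL⟩ : ∃ L, L = 1000*m := ⟨_, rfl⟩
  obtain ⟨n, hn⟩ : ∃ n, n = t / L := ⟨_, rfl⟩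
  obtain ⟨s, hs⟩ : ∃ s, s = 6*n/(5*m) + 1 := ⟨_, rfl⟩
  have hL0 : 0 < L := by omega
  have hn6 : 1000000*m ≤ n := by
    rw [hn, Nat.le_div_iff_mul_le hL0, hL]
    calc 1000000*m*(1000*m) = 1000000000*m^2 := by ring
      _ ≤ t := ht
  have hn0 : 0 < n := by omega
  have hLn : L*n ≤ t := by
    rw [hn]
    calc L*(t/L) = (t/L)*L := by ring
      _ ≤ t := Nat.div_mul_le_self t L
  have ht_lt : t < L*n + L := by
    have h1 := Nat.div_add_mod t L
    have h2 := Nat.mod_lt t hL0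
    obtain ⟨A, hA⟩ : ∃ A, L * (t / L) = A := ⟨_, rfl⟩
    rw [hn, hA]
    rw [hA] at h1
    omega
  have hs6 : 6*n ≤ 5*m*s := by
    have h1 := Nat.div_add_mod (6*n) (5*m)
    have h2 : (6*n) % (5*m) < 5*m := Nat.mod_lt _ (by omega)
    rw [hs]
    obtain ⟨A, hA⟩ : ∃ A, 5*m*(6*n/(5*m)) = A := ⟨_, rfl⟩
    rw [show 5*m*(6*n/(5*m)+1) = 5*m*(6*n/(5*m)) + 5*m by ring, hA]
    rw [hA] at h1
    omega
  have hs_ub : 5*m*s ≤ 6*n + 5*m := by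
    have h1 : 5*m*(6*n/(5*m)) ≤ 6*n := Nat.mul_div_le (6*n) (5*m)
    rw [hs]
    rw [show 5*m*(6*n/(5*m)+1) = 5*m*(6*n/(5*m)) + 5*m by ring]
    omega
  have hsn : s ≤ n := by
    have h1 : 6*n/(5*m) ≤ 6*n/10 := Nat.div_le_div_left (by omega) (by omega)
    have h2 : 6*n/10 < n := by
      rw [Nat.div_lt_iff_lt_mul (by omega)]
      omega
    rw [hs]
    omega
  obtain ⟨C, hCgood, hCcard⟩ := exists_code' n m s hm1 hsn hs6
  refine ⟨C.image (strA m L n t), ?_, ?_, ?_⟩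
  · -- cardinality
    rw [Finset.card_image_of_injective C (strA_inj hm1 hL hLn)]
    refine le_trans ?_ hCcard
    rw [Real.exp_le_exp]
    have hm0 : (0:ℝ) < m := by positivity
    have htn : (t : ℝ) ≤ 2000*m*n := by
      have h1 : t < L*n + L := ht_lt
      have h2 : (t:ℝ) ≤ (L:ℝ)*n + L := by
        have := (Nat.cast_le (α := ℝ)).mpr (le_of_lt h1)
        push_cast at this
        linarith
      have h3 : (L:ℝ) = 1000*m := by rw [hL]; push_cast; ring
      have hn1 : (1:ℝ) ≤ n := by
        have : (1:ℕ) ≤ n := hn0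
        exact_mod_cast this
      rw [h3] at h2
      nlinarith
    rw [div_le_div_iff₀ (by positivity) (by positivity)]
    have hnn : (0:ℝ) ≤ n := Nat.cast_nonneg n
    nlinarith [htn, hm0, hnn]
  · -- gap property
    intro a ha p q hpq hap haq
    rw [Finset.mem_image] at ha
    obtain ⟨pc, -, rfl⟩ := ha
    exact strA_gap hm1 hL pc p q hpq hap haq
  · -- coverage
    intro S hSF hScard
    set T := C.filter (fun p => strA m L n t p ∈ S) with hT
    have hTS : T.image (strA m L n t) = S := by
      apply Finset.Subset.antisymm
      · intro a ha
        rw [Finset.mem_image] at ha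
        obtain ⟨p, hp, rfl⟩ := ha
        exact (Finset.mem_filter.mp hp).2
      · intro a ha
        have := hSF ha
        rw [Finset.mem_image] at this ⊢
        obtain ⟨p, hp, rfl⟩ := this
        exact ⟨p, Finset.mem_filter.mpr ⟨hp, ha⟩, rfl⟩
    have hTcard : T.card = 1000*m := by
      rw [← hScard, ← hTS, Finset.card_image_of_injective T (strA_inj hm1 hL hLn)]
    have hTgood : ∀ p ∈ T, ∀ q ∈ T, p ≠ q → agr p q < s := by
      intro p hp q hq hpq
      exact hCgood p (Finset.mem_of_mem_filter p hp) q (Finset.mem_of_mem_filter q hq) hpq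
    set O := Finset.univ.filter (fun i : Fin t => ∃ a ∈ S, a i = true) with hO
    have hOmem : ∀ p ∈ T, ∀ i : Fin t, strA m L n t p i = true → i ∈ O := by
      intro p hp i hi
      rw [hO, Finset.mem_filter]
      exact ⟨Finset.mem_univ i, strA m L n t p, (Finset.mem_filter.mp hp).2, hi⟩
    have hset : {i : Fin t | ∃ a ∈ S, a i = true} = (O : Set (Fin t)) := by
      ext i
      simp [hO]
    rw [hset, Set.ncard_coe_finset]
    have hcs := cs_bound s T hTgood
    have hor := or_bound hm1 hL hLn T O hOmem
    -- numerical conclusion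
    set D := (Finset.univ.filter
      (fun bv : Fin n × Fin m => ∃ p ∈ T, p bv.1 = bv.2)).card with hD
    rw [hTcard] at hcs
    have hrm : (2:ℝ) ≤ m := by exact_mod_cast hm
    have hrn : (1000000:ℝ)*m ≤ n := by exact_mod_cast hn6
    have hrs : 5*(m:ℝ)*s ≤ 6*n + 5*m := by exact_mod_cast hs_ub
    have hrt : (t:ℝ) ≤ 1000*m*(n+1) := by
      have h2 : (t:ℝ) ≤ (L:ℝ)*n + L := by
        have := (Nat.cast_le (α := ℝ)).mpr (le_of_lt ht_lt)
        push_cast at this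
        linarith
      have h3 : (L:ℝ) = 1000*m := by rw [hL]; push_cast; ring
      rw [h3] at h2
      linarith
    have hror : 999*(D:ℝ) ≤ (O.card : ℝ) := by exact_mod_cast hor
    have hcast : ((1000*m : ℕ) : ℝ) = 1000*(m:ℝ) := by push_cast; ring
    rw [hcast] at hcs
    have hm0' : (0:ℝ) < m := by linarith
    have hmn0 : (0:ℝ) < (m:ℝ)*n := by
      have h1 : (0:ℝ) < n := by linarith [hrn]
      positivity
    -- denominator bound
    have hden : (1000*(m:ℝ))*n + (1000*(m:ℝ))*(1000*(m:ℝ))*s ≤ 1201001*((m:ℝ)*n) := by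
      have e1 := mul_le_mul_of_nonneg_left hrs
        (by positivity : (0:ℝ) ≤ 200000*(m:ℝ))
      have h1 := mul_le_mul_of_nonneg_left hrn (le_of_lt hm0')
      nlinarith [e1, h1]
    have hD_lb : 1000000*((m:ℝ)*n) ≤ 1201001*(D:ℝ) := by
      have h1 : ((n:ℝ)*(1000*m))^2 = 1000000*((m:ℝ)*n)*((m:ℝ)*n) := by ring
      have h2 : ((n:ℝ)*(1000*(m:ℝ)))^2 ≤ (D:ℝ)*(1201001*((m:ℝ)*n)) := by
        calc ((n:ℝ)*(1000*(m:ℝ)))^2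
            ≤ (D:ℝ) * ((1000*(m:ℝ))*n + (1000*(m:ℝ))*(1000*(m:ℝ))*s) := hcs
          _ ≤ (D:ℝ)*(1201001*((m:ℝ)*n)) := by
              apply mul_le_mul_of_nonneg_left hden (Nat.cast_nonneg D)
      rw [h1] at h2
      have := (mul_le_mul_iff_of_pos_right hmn0).mp (by linarith : 1000000*((m:ℝ)*n)*((m:ℝ)*n) ≤ 1201001*(D:ℝ)*((m:ℝ)*n))
      linarith [this]
    -- final
    have hn2 : (2000000:ℝ) ≤ n := by
      have h2 : (1000000:ℝ)*2 ≤ 1000000*(m:ℝ) := by linarith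
      linarith
    have hmsmall : 2000000*(m:ℝ) ≤ (m:ℝ)*n := by
      have h2 := mul_le_mul_of_nonneg_left hn2 (le_of_lt hm0')
      linarith
    have hrt' : (t:ℝ) ≤ 1000*((m:ℝ)*n) + 1000*m := by
      have h2 : 1000*(m:ℝ)*(n+1) = 1000*((m:ℝ)*n) + 1000*m := by ring
      linarith
    linarith [hror, hD_lb, hmsmall, hrt', Nat.cast_nonneg (α := ℝ) D]

/-- For every integer `l ≥ 1` and every real `α` with
`1/2 < α < 1 − 1/e`, there exist an integer `k ≥ 2`, a real `c > 1`, and an integer `t₀`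
such that for every `t ≥ t₀` there is a family `F ⊆ {0,1}^t` with:
(i) `|F| ≥ c^t`;
(ii) every `a ∈ F` has at least `l` zeros between any two of its ones (i.e. positions
`p < q` with `a_p = a_q = 1` satisfy `q − p ≥ l + 1`);
(iii) for every `k`-element subset `S ⊆ F`, the coordinatewise OR of the members of `S`
has at least `α·t` coordinates equal to `1`. -/
theorem stmt15 (l : ℕ) (hl : 1 ≤ l) (α : ℝ)
    (hα1 : 1 / 2 < α) (hα2 : α < 1 - 1 / Real.exp 1) :
    ∃ k : ℕ, 2 ≤ k ∧ ∃ c : ℝ, 1 < c ∧ ∃ t₀ : ℕ, ∀ t : ℕ, t₀ ≤ t →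
      ∃ F : Finset (Fin t → Bool),
        c ^ t ≤ (F.card : ℝ) ∧
        (∀ a ∈ F, ∀ p q : Fin t, p < q → a p = true → a q = true →
          l + 1 ≤ q.val - p.val) ∧
        (∀ S : Finset (Fin t → Bool), S ⊆ F → S.card = k →
          α * (t : ℝ) ≤ ({i : Fin t | ∃ a ∈ S, a i = true}.ncard : ℝ)) := by
  have hα : α ≤ 16/25 := by
    have he : Real.exp 1 < 2.7182818286 := Real.exp_one_lt_d9
    have hepos : (0:ℝ) < Real.exp 1 := Real.exp_pos 1
    have h1 : (9:ℝ)/25 < 1 / Real.exp 1 := by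
      rw [lt_div_iff₀ hepos]
      nlinarith
    linarith
  set m := l + 1 with hmdef
  have hm2 : 2 ≤ m := by omega
  refine ⟨1000*m, by omega, Real.exp (1/(200000*(m:ℝ)^2)), ?_, 1000000000*m^2, ?_⟩
  · rw [show (1:ℝ) = Real.exp 0 by rw [Real.exp_zero]]
    apply Real.exp_lt_exp.mpr
    have : (0:ℝ) < (m:ℝ) := by
      have : (1:ℕ) ≤ m := by omega
      exact_mod_cast Nat.lt_of_lt_of_le Nat.zero_lt_one this
    positivity
  · intro t ht
    obtain ⟨F, hFcard, hFgap, hFcov⟩ := construction m hm2 t ht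
    refine ⟨F, ?_, ?_, ?_⟩
    · refine le_trans ?_ hFcard
      rw [← Real.exp_nat_mul]
      apply Real.exp_le_exp.mpr
      rw [mul_one_div]
    · intro a ha p q hpq hap haq
      have := hFgap a ha p q hpq hap haq
      omega
    · intro S hS hScard
      have h1 := hFcov S hS hScard
      have ht0 : (0:ℝ) ≤ t := Nat.cast_nonneg t
      nlinarith [h1, hα, ht0]
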